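/- Let K ⊆ ℝⁿ be a polytope, E ⊆ ℝⁿ a d-dimensional subspace, and u ∈ E^⊥ a vector such that u ∉ P_{E^⊥} N(K,F) for every nonempty face F of K with dim P_{E^⊥} N(K,F) ≤ n-d-1. Let F̃ = {F face of K : u ∈ P_{E^⊥} N(K,F)}. Then the sets {P_E(relint F) : F ∈ F̃} are pairwise disjoint and their union over F ∈ F̃ of P_E F equals P_E K; moreover every F ∈ F̃ has dimension ≤ d, and on each d-dimensional F ∈ F̃ the projection P_E restricts to an affine isomorphism onto P_E F. -/

import Mathlib

set_option maxHeartbeats 1000000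

open scoped RealInnerProductSpace
open MeasureTheory
noncomputable section

/-- `F` is a face of the convex set `K`. -/
def IsFace {V : Type*} [AddCommGroup V] [Module ℝ V] (K F : Set V) : Prop :=
  F ⊆ K ∧ Convex ℝ F ∧ ∀ x ∈ K, ∀ y ∈ K, (1 / 2 : ℝ) • (x + y) ∈ F → x ∈ F ∧ y ∈ F

/-- The (affine) dimension of a set. -/
def setDim {n : ℕ} (A : Set (EuclideanSpace ℝ (Fin n))) : ℕ :=
  Module.finrank ℝ (affineSpan ℝ A).direction

/-- The normal cone of the polytope `K` at the face `F`. -/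
def normalConeAtFace {n : ℕ} (K F : Set (EuclideanSpace ℝ (Fin n))) :
    Set (EuclideanSpace ℝ (Fin n)) :=
  {w | ∀ x ∈ F, ∀ z ∈ K, ⟪z - x, w⟫ ≤ 0}

section Aux
open Set Module Finset

variable {V : Type*} [NormedAddCommGroup V] [InnerProductSpace ℝ V]

variable {V : Type*} [NormedAddCommGroup V] [InnerProductSpace ℝ V]

/-- one-step: if `σ ∈ [1/2, 1]` then the right endpoint is in the face. -/
lemma face_step {K F : Set V} (hKc : Convex ℝ K) (hF : IsFace K F)
    {p q : V} (hp : p ∈ K) (hq : q ∈ K) {σ : ℝ} (h1 : 1/2 ≤ σ) (h2 : σ ≤ 1)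
    (hz : (1-σ) • p + σ • q ∈ F) : q ∈ F := by
  set m : V := (2-2*σ) • p + (2*σ-1) • q with hm
  have hmK : m ∈ K := by
    have := hKc hp hq (by linarith : (0:ℝ) ≤ 2-2*σ) (by linarith : (0:ℝ) ≤ 2*σ-1) (by ring)
    simpa [hm] using this
  have hmid : (1/2 : ℝ) • (q + m) ∈ F := by
    have : (1/2 : ℝ) • (q + m) = (1-σ) • p + σ • q := by
      rw [hm]; module
    rwa [this]
  exact (hF.2.2 q hq m hmK hmid).1

lemma face_right {K F : Set V} (hKc : Convex ℝ K) (hF : IsFace K F) :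
    ∀ (j : ℕ) (p q : V) (σ : ℝ), p ∈ K → q ∈ K → 0 < σ → σ ≤ 1 → 1 ≤ 2^j * σ →
      (1-σ) • p + σ • q ∈ F → q ∈ F := by
  intro j
  induction j with
  | zero =>
    intro p q σ hp hq h0 h1 hj hz
    have : σ = 1 := le_antisymm h1 (by simpa using hj)
    subst this
    simpa using hz
  | succ j ih =>
    intro p q σ hp hq h0 h1 hj hz
    by_cases hc : 1/2 ≤ σ
    · exact face_step hKc hF hp hq hc h1 hz
    · push_neg at hc
      -- m' = (1-2σ) p + 2σ q ∈ K, midpoint (p, m') = z ∈ F so m' ∈ F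
      set m : V := (1-2*σ) • p + (2*σ) • q with hm
      have hmK : m ∈ K := hKc hp hq (by linarith) (by linarith) (by ring)
      have hmid : (1/2 : ℝ) • (p + m) ∈ F := by
        have : (1/2 : ℝ) • (p + m) = (1-σ) • p + σ • q := by rw [hm]; module
        rwa [this]
      have hmF : m ∈ F := (hF.2.2 p hp m hmK hmid).2
      refine ih p q (2*σ) hp hq (by linarith) (by linarith) ?_ (by rw [← hm] at *; convert hmF using 2 <;> ring)
      calc (1:ℝ) ≤ 2^(j+1) * σ := hj
        _ = 2^j * (2*σ) := by ring
      
lemma isExtreme_of_isFace {K F : Set V} (hKc : Convex ℝ K) (hF : IsFace K F) :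
    IsExtreme ℝ K F := by
  constructor
  · exact hF.1
  · rintro x₁ hx₁ x₂ hx₂ x hxF ⟨a, b, ha, hb, hab, rfl⟩
    obtain ⟨j, hj⟩ := pow_unbounded_of_one_lt (1/b) (one_lt_two (α := ℝ))
    have hj' : 1 ≤ 2^j * b := by
      rw [div_lt_iff₀ hb] at hj
      nlinarith [pow_pos (zero_lt_two (α := ℝ)) j]
    have key : ∀ (x₁ x₂ : V) (a b : ℝ), x₁ ∈ K → x₂ ∈ K → 0 < a → 0 < b → a + b = 1 →
        1 ≤ 2^j * b → a • x₁ + b • x₂ ∈ F → x₂ ∈ F := by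
      intro y₁ y₂ c e hy₁ hy₂ hc he hce hje hzF
      refine face_right hKc hF j y₁ y₂ e hy₁ hy₂ he (by linarith) hje ?_
      have : c = 1 - e := by linarith
      rwa [this] at hzF
    refine (fun h => h.1) (⟨?_, ?_⟩ : x₁ ∈ F ∧ x₂ ∈ F)
    · obtain ⟨j', hj'2⟩ := pow_unbounded_of_one_lt (1/a) (one_lt_two (α := ℝ))
      have hj'' : 1 ≤ 2^j' * a := by
        rw [div_lt_iff₀ ha] at hj'2
        nlinarith [pow_pos (zero_lt_two (α := ℝ)) j']
      have key' : ∀ (x₁ x₂ : V) (c e : ℝ), x₁ ∈ K → x₂ ∈ K → 0 < c → 0 < e → c + e = 1 →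
          1 ≤ 2^j' * e → c • x₁ + e • x₂ ∈ F → x₂ ∈ F := by
        intro y₁ y₂ c e hy₁ hy₂ hc he hce hje hzF
        refine face_right hKc hF j' y₁ y₂ e hy₁ hy₂ he (by linarith) hje ?_
        have : c = 1 - e := by linarith
        rwa [this] at hzF
      exact key' x₂ x₁ b a hx₂ hx₁ hb ha (by linarith) hj'' (by rwa [add_comm] at hxF)
    · exact key x₁ x₂ a b hx₁ hx₂ ha hb hab hj' hxF

variable {V : Type*} [NormedAddCommGroup V] [InnerProductSpace ℝ V]

/-- If a face `G` contains a point of the intrinsic interior of a face `F`,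
then `F ⊆ G`. -/
lemma face_subset_of_mem_intrinsicInterior {K F G : Set V} (hKc : Convex ℝ K)
    (hF : IsFace K F) (hG : IsFace K G) {x : V}
    (hx : x ∈ intrinsicInterior ℝ F) (hxG : x ∈ G) : F ⊆ G := by
  intro p hp
  rcases eq_or_ne p x with rfl | hpx
  · exact hxG
  obtain ⟨x', hx', hx'e⟩ := mem_intrinsicInterior.1 hx
  have hxF : x ∈ F := intrinsicInterior_subset hx
  have hpa : p ∈ affineSpan ℝ F := subset_affineSpan ℝ F hp
  -- path γ t = p + t • (x - p), inside the affine span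
  have hmem : ∀ t : ℝ, p + t • (x - p) ∈ affineSpan ℝ F := by
    intro t
    have := AffineMap.lineMap_mem (k := ℝ) t hpa (hx'e ▸ x'.2)
    simpa [AffineMap.lineMap_apply, add_comm] using this
  set γ : ℝ → affineSpan ℝ F := fun t => ⟨p + t • (x - p), hmem t⟩ with hγ
  have hγc : Continuous γ := by
    apply Continuous.subtype_mk
    continuity
  have hγ1 : γ 1 = x' := by
    apply Subtype.ext
    simp [hγ, hx'e]
  have hopen : IsOpen (γ ⁻¹' (interior ((↑) ⁻¹' F : Set <| affineSpan ℝ F))) :=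
    isOpen_interior.preimage hγc
  have h1mem : (1:ℝ) ∈ γ ⁻¹' (interior ((↑) ⁻¹' F : Set <| affineSpan ℝ F)) := by
    simp [hγ1, hx']
  obtain ⟨ε, hε, hball⟩ := Metric.isOpen_iff.1 hopen 1 h1mem
  set t : ℝ := 1 + ε/2 with ht
  have htmem : γ t ∈ interior ((↑) ⁻¹' F : Set <| affineSpan ℝ F) := by
    apply hball
    have : dist t 1 = ε/2 := by
      rw [Real.dist_eq, ht]
      rw [show (1 + ε/2 - 1 : ℝ) = ε/2 by ring, abs_of_pos (by linarith)]
    simp [Metric.mem_ball, this]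
    linarith
  have hq : p + t • (x - p) ∈ F := by
    have h2 : γ t ∈ ((↑) ⁻¹' F : Set <| affineSpan ℝ F) := interior_subset htmem
    exact h2
  -- x = (1 - 1/t) • p + (1/t) • q
  have ht1 : (1:ℝ) < t := by rw [ht]; linarith
  have ht0 : (0:ℝ) < t := by linarith
  have hxcomb : x = (1 - 1/t) • p + (1/t) • (p + t • (x - p)) := by
    match_scalars <;> field_simp <;> ring
  have hext := isExtreme_of_isFace hKc hG
  have hqK : p + t • (x - p) ∈ K := hF.1 hq
  have hpK : p ∈ K := hF.1 hp
  have : x ∈ openSegment ℝ p (p + t • (x - p)) := by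
    refine ⟨1 - 1/t, 1/t, ?_, by positivity, by ring, hxcomb.symm⟩
    have : 1/t < 1 := by
      rw [div_lt_one ht0]; exact ht1
    linarith
  exact hext.2 hpK hqK hxG this

variable {V : Type*} [NormedAddCommGroup V] [InnerProductSpace ℝ V]

lemma inner_isLinearMap (w : V) : IsLinearMap ℝ (fun x : V => ⟪x, w⟫) :=
  ⟨fun x y => inner_add_left x y w, fun c x => real_inner_smul_left x w c⟩

lemma inner_le_sup' {s : Finset V} (hs : s.Nonempty) (w : V) {x : V}
    (hx : x ∈ convexHull ℝ (↑s : Set V)) : ⟪x, w⟫ ≤ s.sup' hs (fun v => ⟪v, w⟫) := by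
  have : convexHull ℝ (↑s : Set V) ⊆ {y : V | ⟪y, w⟫ ≤ s.sup' hs (fun v => ⟪v, w⟫)} := by
    apply convexHull_min
    · intro v hv
      exact Finset.le_sup' (fun v => ⟪v, w⟫) hv
    · exact convex_halfSpace_le (inner_isLinearMap w) _
  exact this hx

/-- The argmax set of a linear functional on a polytope is the hull of the argmax vertices. -/
lemma argmax_eq_hull {s : Finset V} (hs : s.Nonempty) (w : V) :
    {x ∈ convexHull ℝ (↑s : Set V) | ⟪x, w⟫ = s.sup' hs (fun v => ⟪v, w⟫)} =
      convexHull ℝ (↑(s.filter (fun v => ⟪v, w⟫ = s.sup' hs (fun v => ⟪v, w⟫))) : Set V) := by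
  set m := s.sup' hs (fun v => ⟪v, w⟫) with hm
  set T := s.filter (fun v => ⟪v, w⟫ = m) with hT
  apply Set.Subset.antisymm
  · rintro x ⟨hxK, hxm⟩
    rw [Finset.convexHull_eq] at hxK
    obtain ⟨lam, hlam0, hlam1, hlamc⟩ := hxK
    rw [Finset.centerMass_eq_of_sum_1 _ _ hlam1] at hlamc
    simp only [id] at hlamc
    have hinner : ⟪x, w⟫ = ∑ v ∈ s, lam v * ⟪v, w⟫ := by
      rw [← hlamc, sum_inner]
      congr 1; ext v; rw [real_inner_smul_left]
    have hzero : ∑ v ∈ s, lam v * (m - ⟪v, w⟫) = 0 := by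
      simp only [mul_sub]
      rw [Finset.sum_sub_distrib, ← Finset.sum_mul, hlam1, one_mul, ← hinner, hxm]
      ring
    have hall : ∀ v ∈ s, lam v * (m - ⟪v, w⟫) = 0 := by
      rw [Finset.sum_eq_zero_iff_of_nonneg] at hzero
      · exact hzero
      · intro v hv
        have h1 : ⟪v, w⟫ ≤ m := Finset.le_sup' (fun v => ⟪v, w⟫) hv
        have := hlam0 v hv
        nlinarith
    have hsupp : ∀ v ∈ s, v ∉ T → lam v = 0 := by
      intro v hv hvT
      by_contra hne
      have : m - ⟪v, w⟫ = 0 := by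
        have := hall v hv
        rcases mul_eq_zero.1 this with h | h
        · exact absurd h hne
        · exact h
      exact hvT (Finset.mem_filter.2 ⟨hv, by linarith⟩)
    have hTs : T ⊆ s := Finset.filter_subset _ _
    have hsum : ∑ v ∈ T, lam v = 1 := by
      rw [← hlam1]
      exact (Finset.sum_subset hTs (fun v hv hvT => hsupp v hv hvT)).symm ▸ rfl
    have hsum' : ∑ v ∈ T, lam v = ∑ v ∈ s, lam v :=
      Finset.sum_subset hTs (fun v hv hvT => hsupp v hv hvT)
    have hcm : ∑ v ∈ T, lam v • v = x := by
      rw [← hlamc]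
      exact Finset.sum_subset hTs (fun v hv hvT => by rw [hsupp v hv hvT, zero_smul])
    rw [Finset.convexHull_eq]
    refine ⟨lam, fun v hv => hlam0 v (hTs hv), by rw [hsum'] at *; exact hlam1 ▸ hsum', ?_⟩
    rw [Finset.centerMass_eq_of_sum_1 _ _ (by rw [hsum']; exact hlam1)]
    simpa using hcm
  · intro x hx
    have hxK : x ∈ convexHull ℝ (↑s : Set V) :=
      convexHull_mono (by exact_mod_cast Finset.coe_subset.2 (Finset.filter_subset _ _)) hx
    refine ⟨hxK, ?_⟩
    rw [Finset.convexHull_eq] at hx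
    obtain ⟨lam, hlam0, hlam1, hlamc⟩ := hx
    rw [Finset.centerMass_eq_of_sum_1 _ _ hlam1] at hlamc
    simp only [id] at hlamc
    have : ⟪x, w⟫ = ∑ v ∈ T, lam v * ⟪v, w⟫ := by
      rw [← hlamc, sum_inner]
      congr 1; ext v; rw [real_inner_smul_left]
    rw [this]
    have : ∀ v ∈ T, lam v * ⟪v, w⟫ = lam v * m := by
      intro v hv
      rw [(Finset.mem_filter.1 hv).2]
    rw [Finset.sum_congr rfl this, ← Finset.sum_mul, hlam1, one_mul]

lemma argmax_nonempty {s : Finset V} (hs : s.Nonempty) (w : V) :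
    (s.filter (fun v => ⟪v, w⟫ = s.sup' hs (fun v => ⟪v, w⟫))).Nonempty := by
  obtain ⟨v, hv, hveq⟩ := Finset.exists_mem_eq_sup' hs (fun v => ⟪v, w⟫)
  exact ⟨v, Finset.mem_filter.2 ⟨hv, hveq.symm⟩⟩

lemma isFace_argmax {s : Finset V} (hs : s.Nonempty) (w : V) :
    IsFace (convexHull ℝ (↑s : Set V))
      {x ∈ convexHull ℝ (↑s : Set V) | ⟪x, w⟫ = s.sup' hs (fun v => ⟪v, w⟫)} := by
  set m := s.sup' hs (fun v => ⟪v, w⟫) with hm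
  refine ⟨fun x hx => hx.1, ?_, ?_⟩
  · have : {x ∈ convexHull ℝ (↑s : Set V) | ⟪x, w⟫ = m} =
        convexHull ℝ (↑s : Set V) ∩ {x : V | ⟪x, w⟫ = m} := rfl
    rw [this]
    exact (convex_convexHull ℝ _).inter (convex_hyperplane (inner_isLinearMap w) m)
  · rintro x hx y hy ⟨hmidK, hmidm⟩
    have hx' : ⟪x, w⟫ ≤ m := inner_le_sup' hs w hx
    have hy' : ⟪y, w⟫ ≤ m := inner_le_sup' hs w hy
    have : (1/2 : ℝ) * ⟪x, w⟫ + (1/2 : ℝ) * ⟪y, w⟫ = m := by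
      rw [← hmidm, real_inner_smul_left, inner_add_left]; ring
    exact ⟨⟨hx, by linarith⟩, ⟨hy, by linarith⟩⟩

lemma mem_argmax_iff {s : Finset V} (hs : s.Nonempty) (w : V) (x : V) :
    x ∈ {x ∈ convexHull ℝ (↑s : Set V) | ⟪x, w⟫ = s.sup' hs (fun v => ⟪v, w⟫)} ↔
      x ∈ convexHull ℝ (↑s : Set V) ∧
        ∀ z ∈ convexHull ℝ (↑s : Set V), ⟪z - x, w⟫ ≤ 0 := by
  set m := s.sup' hs (fun v => ⟪v, w⟫) with hm
  constructor
  · rintro ⟨hxK, hxm⟩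
    refine ⟨hxK, fun z hz => ?_⟩
    rw [inner_sub_left, hxm]
    have := inner_le_sup' hs w hz
    linarith
  · rintro ⟨hxK, hmax⟩
    refine ⟨hxK, le_antisymm (inner_le_sup' hs w hxK) ?_⟩
    obtain ⟨v, hv, hveq⟩ := Finset.exists_mem_eq_sup' hs (fun v => ⟪v, w⟫)
    have hvK : v ∈ convexHull ℝ (↑s : Set V) := subset_convexHull ℝ _ hv
    have := hmax v hvK
    rw [inner_sub_left] at this
    rw [hm, hveq]
    linarith

lemma setDim_le_of_subset_submodule {n : ℕ} {A : Set (EuclideanSpace ℝ (Fin n))}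
    {W : Submodule ℝ (EuclideanSpace ℝ (Fin n))} (h : A ⊆ (W : Set (EuclideanSpace ℝ (Fin n)))) :
    setDim A ≤ finrank ℝ W := by
  have h1 : affineSpan ℝ A ≤ W.toAffineSubspace := by
    rw [affineSpan_le]
    intro x hx
    exact h hx
  have h2 : (affineSpan ℝ A).direction ≤ W := by
    have := AffineSubspace.direction_le h1
    rwa [Submodule.toAffineSubspace_direction] at this
  exact Submodule.finrank_mono h2

/-- Key genericity contradiction: if `u ∈ P_{E^⊥} N(K,F)` and some nonzero `m ∈ Eᗮ`
is orthogonal to the whole normal cone, we contradict the genericity of `u`. -/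
lemma key_contra {n d : ℕ} (hd : 1 ≤ d) (hdn : d ≤ n - 1)
    {K : Set (EuclideanSpace ℝ (Fin n))}
    {E : Submodule ℝ (EuclideanSpace ℝ (Fin n))} (hEd : finrank ℝ E = d)
    {Pp : EuclideanSpace ℝ (Fin n) → EuclideanSpace ℝ (Fin n)}
    (hPp : Pp = fun x => (Submodule.orthogonalProjectionOnto Eᗮ x : EuclideanSpace ℝ (Fin n)))
    {u : EuclideanSpace ℝ (Fin n)}
    (hu : ∀ F : Set (EuclideanSpace ℝ (Fin n)), IsFace K F → F.Nonempty →
      setDim (Pp '' normalConeAtFace K F) ≤ n - d - 1 → u ∉ Pp '' normalConeAtFace K F)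
    {F : Set (EuclideanSpace ℝ (Fin n))} (hF : IsFace K F) (hFne : F.Nonempty)
    (hFu : u ∈ Pp '' normalConeAtFace K F)
    {m : EuclideanSpace ℝ (Fin n)} (hmE : m ∈ Eᗮ) (hm0 : m ≠ 0)
    (hperp : ∀ w ∈ normalConeAtFace K F, ⟪m, w⟫ = 0) : False := by
  set W₀ := (E ⊔ (ℝ ∙ m))ᗮ with hW₀
  -- the image of the normal cone is inside W₀
  have himg : Pp '' normalConeAtFace K F ⊆ (W₀ : Set (EuclideanSpace ℝ (Fin n))) := by
    rintro _ ⟨w, hw, rfl⟩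
    rw [SetLike.mem_coe, hW₀, Submodule.mem_orthogonal]
    intro y hy
    rcases Submodule.mem_sup.1 hy with ⟨e, he, c, hc, rfl⟩
    rcases Submodule.mem_span_singleton.1 hc with ⟨r, rfl⟩
    have h1 : ⟪e, Pp w⟫ = 0 := by
      rw [hPp]
      exact Submodule.inner_right_of_mem_orthogonal he (Submodule.coe_mem _)
    have h2 : ⟪m, Pp w⟫ = 0 := by
      rw [hPp]
      have hmm : (Submodule.orthogonalProjectionOnto Eᗮ m : EuclideanSpace ℝ (Fin n)) = m :=
        Submodule.starProjection_eq_self_iff.2 hmE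
      calc ⟪m, (Submodule.orthogonalProjectionOnto Eᗮ w : EuclideanSpace ℝ (Fin n))⟫
          = ⟪(Submodule.orthogonalProjectionOnto Eᗮ w : EuclideanSpace ℝ (Fin n)), m⟫ := real_inner_comm _ _
        _ = ⟪w, (Submodule.orthogonalProjectionOnto Eᗮ m : EuclideanSpace ℝ (Fin n))⟫ :=
            Submodule.inner_starProjection_left_eq_right Eᗮ w m
        _ = ⟪w, m⟫ := by rw [hmm]
        _ = ⟪m, w⟫ := real_inner_comm _ _
        _ = 0 := hperp w hw
    rw [inner_add_left, h1, real_inner_smul_left, h2]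
    ring
  -- dimension of W₀
  have hmnotE : m ∉ E := fun hmem =>
    hm0 (inner_self_eq_zero.1 (Submodule.inner_right_of_mem_orthogonal hmem hmE))
  have hinf : E ⊓ (ℝ ∙ m) = ⊥ := by
    rw [Submodule.eq_bot_iff]
    rintro x ⟨hxE, hxm⟩
    rcases Submodule.mem_span_singleton.1 hxm with ⟨r, rfl⟩
    rcases eq_or_ne r 0 with rfl | hr
    · simp
    · exact absurd (by simpa [hr] using E.smul_mem r⁻¹ hxE : m ∈ E) hmnotE
  have hsup : finrank ℝ (E ⊔ (ℝ ∙ m) : Submodule ℝ (EuclideanSpace ℝ (Fin n))) = d + 1 := by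
    have := Submodule.finrank_sup_add_finrank_inf_eq E (ℝ ∙ m)
    rw [hinf, finrank_bot, hEd, finrank_span_singleton hm0] at this
    omega
  have horth := Submodule.finrank_add_finrank_orthogonal (K := (E ⊔ (ℝ ∙ m)))
  rw [hsup, finrank_euclideanSpace_fin, ← hW₀] at horth
  have hEr := Submodule.finrank_add_finrank_orthogonal (K := E)
  rw [hEd, finrank_euclideanSpace_fin] at hEr
  have hW₀dim : finrank ℝ W₀ = n - d - 1 := by omega
  have hdim : setDim (Pp '' normalConeAtFace K F) ≤ n - d - 1 := by
    rw [← hW₀dim]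
    exact setDim_le_of_subset_submodule himg
  exact hu F hF hFne hdim hFu

/-- The normal cone is orthogonal to the direction of the face. -/
lemma normalCone_subset_orthogonal_direction {n : ℕ}
    {K F : Set (EuclideanSpace ℝ (Fin n))} (hF : IsFace K F) :
    normalConeAtFace K F ⊆ ((affineSpan ℝ F).directionᗮ : Set (EuclideanSpace ℝ (Fin n))) := by
  intro w hw
  rw [SetLike.mem_coe, Submodule.mem_orthogonal]
  intro y hy
  rw [direction_affineSpan] at hy
  have hle : vectorSpan ℝ F ≤ (ℝ ∙ w)ᗮ := by
    rw [vectorSpan_def]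
    rw [Submodule.span_le]
    rintro _ ⟨a, ha, b, hb, rfl⟩
    rw [SetLike.mem_coe, Submodule.mem_orthogonal_singleton_iff_inner_right]
    have h1 : ⟪a - b, w⟫ ≤ 0 := hw b hb a (hF.1 ha)
    have h2 : ⟪b - a, w⟫ ≤ 0 := hw a ha b (hF.1 hb)
    have h3 : ⟪a - b, w⟫ = 0 := by
      rw [show b - a = -(a-b) by abel, inner_neg_left] at h2
      linarith
    show ⟪w, a -ᵥ b⟫ = 0
    rw [vsub_eq_sub, real_inner_comm]
    exact h3
  have := hle hy
  rw [Submodule.mem_orthogonal_singleton_iff_inner_right] at this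
  rw [real_inner_comm]
  exact this

lemma setDim_face_le {n d : ℕ} (hd : 1 ≤ d) (hdn : d ≤ n - 1)
    {K : Set (EuclideanSpace ℝ (Fin n))}
    {E : Submodule ℝ (EuclideanSpace ℝ (Fin n))} (hEd : finrank ℝ E = d)
    {Pp : EuclideanSpace ℝ (Fin n) → EuclideanSpace ℝ (Fin n)}
    (hPp : Pp = fun x => (Submodule.orthogonalProjectionOnto Eᗮ x : EuclideanSpace ℝ (Fin n)))
    {u : EuclideanSpace ℝ (Fin n)}
    (hu : ∀ F : Set (EuclideanSpace ℝ (Fin n)), IsFace K F → F.Nonempty →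
      setDim (Pp '' normalConeAtFace K F) ≤ n - d - 1 → u ∉ Pp '' normalConeAtFace K F)
    {F : Set (EuclideanSpace ℝ (Fin n))} (hF : IsFace K F) (hFne : F.Nonempty)
    (hFu : u ∈ Pp '' normalConeAtFace K F) : setDim F ≤ d := by
  set W := (affineSpan ℝ F).directionᗮ with hW
  set PpL : EuclideanSpace ℝ (Fin n) →ₗ[ℝ] EuclideanSpace ℝ (Fin n) :=
    Eᗮ.subtype.comp (Submodule.orthogonalProjectionOnto Eᗮ).toLinearMap with hPpL
  have hPp' : Pp = ⇑PpL := by rw [hPp]; rfl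
  have himg : Pp '' normalConeAtFace K F ⊆ (W.map PpL : Set (EuclideanSpace ℝ (Fin n))) := by
    rintro _ ⟨w, hw, rfl⟩
    exact ⟨w, normalCone_subset_orthogonal_direction hF hw, by rw [hPp']⟩
  have h1 : setDim (Pp '' normalConeAtFace K F) ≤ finrank ℝ (W.map PpL) :=
    setDim_le_of_subset_submodule himg
  have h2 : finrank ℝ (W.map PpL) ≤ finrank ℝ W := Submodule.finrank_map_le PpL W
  have h3 : finrank ℝ (affineSpan ℝ F).direction + finrank ℝ W = n := by
    have := Submodule.finrank_add_finrank_orthogonal (K := (affineSpan ℝ F).direction)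
    rwa [finrank_euclideanSpace_fin, ← hW] at this
  have h4 : ¬ (setDim (Pp '' normalConeAtFace K F) ≤ n - d - 1) := by
    intro hle
    exact hu F hF hFne hle hFu
  have h5 : setDim F = finrank ℝ (affineSpan ℝ F).direction := rfl
  omega

variable {V : Type*} [NormedAddCommGroup V] [InnerProductSpace ℝ V]


/-- Covering lemma: every point of `P_E K` is in `P_E F` for some face `F` whose
normal cone's projection contains `u`. -/
lemma cover_lemma {n : ℕ}
    (s : Finset (EuclideanSpace ℝ (Fin n))) (hs : s.Nonempty)
    {E : Submodule ℝ (EuclideanSpace ℝ (Fin n))}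
    {PE Pp : EuclideanSpace ℝ (Fin n) → EuclideanSpace ℝ (Fin n)}
    (hPE : PE = fun x => (Submodule.orthogonalProjectionOnto E x : EuclideanSpace ℝ (Fin n)))
    (hPp : Pp = fun x => (Submodule.orthogonalProjectionOnto Eᗮ x : EuclideanSpace ℝ (Fin n)))
    {u : EuclideanSpace ℝ (Fin n)} (huE : u ∈ Eᗮ)
    {x : EuclideanSpace ℝ (Fin n)} (hx : x ∈ convexHull ℝ (↑s : Set (EuclideanSpace ℝ (Fin n)))) :
    ∃ F : Set (EuclideanSpace ℝ (Fin n)),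
      IsFace (convexHull ℝ (↑s : Set (EuclideanSpace ℝ (Fin n)))) F ∧ F.Nonempty ∧
      u ∈ Pp '' normalConeAtFace (convexHull ℝ (↑s : Set (EuclideanSpace ℝ (Fin n)))) F ∧
      PE x ∈ PE '' F := by
  set K := convexHull ℝ (↑s : Set (EuclideanSpace ℝ (Fin n))) with hK
  have hKconv : Convex ℝ K := convex_convexHull ℝ _
  have hKcomp : IsCompact K := s.finite_toSet.isCompact_convexHull ℝ
  have hKne : K.Nonempty := ⟨x, hx⟩
  set y := PE x with hy
  have hyE : y ∈ E := by rw [hy, hPE]; exact Submodule.coe_mem _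
  have hPEcont : Continuous PE := by
    rw [hPE]
    exact continuous_subtype_val.comp (Submodule.orthogonalProjectionOnto E).continuous
  -- PE is linear-ish facts
  have hPElin : ∀ (p q : EuclideanSpace ℝ (Fin n)) (t : ℝ),
      PE (p + t • (q - p)) = PE p + t • (PE q - PE p) := by
    intro p q t
    rw [hPE]
    simp only [map_add, _root_.map_smul, map_sub]
    push_cast
    ring_nf
  have hPEmem : ∀ v, PE v ∈ E := by intro v; rw [hPE]; exact Submodule.coe_mem _
  have hEinner : ∀ aa ∈ E, ∀ v, ⟪aa, PE v⟫ = ⟪aa, v⟫ := by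
    intro aa haa v
    have hv : v - PE v ∈ Eᗮ := by
      rw [hPE]; exact Submodule.sub_starProjection_mem_orthogonal v
    have := Submodule.inner_right_of_mem_orthogonal haa hv
    rw [inner_sub_right] at this
    linarith
  -- the penalized functionals and their maximizers
  set g : ℕ → EuclideanSpace ℝ (Fin n) → ℝ :=
    fun k z => ⟪z, u⟫ - ((k:ℝ)+1) * ‖PE z - y‖^2 with hg
  have hgc : ∀ k, Continuous (g k) := by
    intro k
    apply Continuous.sub
    · exact continuous_id.inner continuous_const
    · exact continuous_const.mul (((hPEcont.sub continuous_const).norm).pow 2)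
  have hex : ∀ k : ℕ, ∃ z ∈ K, IsMaxOn (g k) K z :=
    fun k => hKcomp.exists_isMaxOn hKne (hgc k).continuousOn
  choose z hzK hzmax using hex
  set a : ℕ → EuclideanSpace ℝ (Fin n) := fun k => PE (z k) - y with ha
  set e : ℕ → EuclideanSpace ℝ (Fin n) := fun k => (-(2*((k:ℝ)+1))) • a k with he
  set w : ℕ → EuclideanSpace ℝ (Fin n) := fun k => u + e k with hw
  have haE : ∀ k, a k ∈ E := fun k => E.sub_mem (hPEmem _) hyE
  -- optimality inequality
  have hopt : ∀ k, ∀ zz ∈ K, ⟪zz - z k, w k⟫ ≤ 0 := by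
    intro k zz hzz
    set c : ℝ := (k:ℝ) + 1 with hc
    have hcpos : 0 < c := by positivity
    set b := PE zz - PE (z k) with hb
    set θ : ℝ := ⟪zz - z k, w k⟫ with hθ
    have hθt : ∀ t : ℝ, 0 < t → t ≤ 1 → θ ≤ c * t * ‖b‖^2 := by
      intro t ht0 ht1
      have hmem : z k + t • (zz - z k) ∈ K := by
        have := hKconv (hzK k) hzz (by linarith : (0:ℝ) ≤ 1 - t) (le_of_lt ht0) (by ring)
        convert this using 1
        module
      have hgle : g k (z k + t • (zz - z k)) ≤ g k (z k) := hzmax k hmem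
      rw [hg] at hgle
      simp only at hgle
      rw [hPElin (z k) zz t] at hgle
      have hnorm : ‖PE (z k) + t • (PE zz - PE (z k)) - y‖^2
          = ‖a k‖^2 + 2*(t*⟪a k, b⟫) + t^2*‖b‖^2 := by
        have h1 : PE (z k) + t • (PE zz - PE (z k)) - y = a k + t • b := by
          rw [ha, hb]; module
        rw [h1, norm_add_sq_real, real_inner_smul_right, norm_smul, Real.norm_eq_abs,
          mul_pow, sq_abs]
      have hip : ⟪z k + t • (zz - z k), u⟫ = ⟪z k, u⟫ + t * ⟪zz - z k, u⟫ := by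
        rw [inner_add_left, real_inner_smul_left]
      rw [hnorm, hip] at hgle
      -- hgle : ⟪z k,u⟫ + t θ' - c(‖a‖² + 2t⟪a,b⟫ + t²‖b‖²) ≤ ⟪z k,u⟫ - c‖a k‖²
      have hstep : t * (⟪zz - z k, u⟫ - 2*c*⟪a k, b⟫) ≤ c * t^2 * ‖b‖^2 := by nlinarith
      have hθeq : θ = ⟪zz - z k, u⟫ - 2*c*⟪a k, b⟫ := by
        rw [hθ, hw]
        simp only
        rw [inner_add_right, he]
        simp only
        rw [real_inner_smul_right]
        have : ⟪zz - z k, a k⟫ = ⟪a k, b⟫ := by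
          rw [real_inner_comm, hb]
          have h2 : PE zz - PE (z k) = PE zz - PE (z k) := rfl
          calc ⟪a k, zz - z k⟫ = ⟪a k, PE (zz - z k)⟫ := (hEinner (a k) (haE k) _).symm
            _ = ⟪a k, PE zz - PE (z k)⟫ := by
                congr 1
                rw [hPE]; simp [map_sub]
        rw [this, hc]
        ring
      rw [hθeq]
      nlinarith [hstep, ht0, sq_nonneg t]
    by_contra hpos
    push_neg at hpos
    have hb2 : (0:ℝ) ≤ ‖b‖^2 := by positivity
    have hA : (0:ℝ) < ‖b‖^2 + 1 := by positivity
    have hq0 : (0:ℝ) < θ/(2*c*(‖b‖^2+1)) := by positivity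
    have ht0pos : (0:ℝ) < min 1 (θ/(2*c*(‖b‖^2+1))) := lt_min one_pos hq0
    have hth := hθt _ ht0pos (min_le_left _ _)
    have h5 : min 1 (θ/(2*c*(‖b‖^2+1))) ≤ θ/(2*c*(‖b‖^2+1)) := min_le_right _ _
    have h6 : c * min 1 (θ/(2*c*(‖b‖^2+1))) * ‖b‖^2 ≤ c * (θ/(2*c*(‖b‖^2+1))) * ‖b‖^2 :=
      mul_le_mul_of_nonneg_right (mul_le_mul_of_nonneg_left h5 hcpos.le) hb2
    have h7 : c * (θ/(2*c*(‖b‖^2+1))) * ‖b‖^2 < c * (θ/(2*c*(‖b‖^2+1))) * (2*(‖b‖^2+1)) := by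
      have hcq : 0 < c * (θ/(2*c*(‖b‖^2+1))) := by positivity
      have hlt : ‖b‖^2 < 2*(‖b‖^2+1) := by linarith
      exact mul_lt_mul_of_pos_left hlt hcq
    have h8 : c * (θ/(2*c*(‖b‖^2+1))) * (2*(‖b‖^2+1)) = θ := by
      field_simp
    linarith
  -- the penalty bound
  have hinnerc : Continuous (fun v : EuclideanSpace ℝ (Fin n) => ⟪v, u⟫) :=
    continuous_id.inner continuous_const
  obtain ⟨zM, hzM, hzMmax⟩ := hKcomp.exists_isMaxOn hKne hinnerc.continuousOn
  set B : ℝ := ⟪zM, u⟫ - ⟪x, u⟫ with hB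
  have hzMle : ∀ v ∈ K, ⟪v, u⟫ ≤ ⟪zM, u⟫ := fun v hv => by simpa using hzMmax hv
  have hB0 : 0 ≤ B := by
    have h := hzMle x hx
    rw [hB]
    linarith
  have hbound : ∀ k : ℕ, ‖a k‖^2 ≤ B/((k:ℝ)+1) := by
    intro k
    have h1 : g k x ≤ g k (z k) := hzmax k hx
    rw [hg] at h1
    simp only at h1
    rw [← hy] at h1
    simp only [sub_self, norm_zero] at h1
    have h2 : ⟪z k, u⟫ ≤ ⟪zM, u⟫ := hzMle (z k) (hzK k)
    have hc : (0:ℝ) < (k:ℝ)+1 := by positivity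
    rw [le_div_iff₀ hc]
    nlinarith [h1, h2]
  -- pigeonhole on the argmax vertex sets
  set T : ℕ → Finset (EuclideanSpace ℝ (Fin n)) :=
    fun k => s.filter (fun v => ⟪v, w k⟫ = s.sup' hs (fun v => ⟪v, w k⟫)) with hT
  have hTsub : ∀ k, T k ∈ s.powerset := fun k => Finset.mem_powerset.2 (Finset.filter_subset _ _)
  have hpigeon : ∃ t ∈ s.powerset, {k : ℕ | T k = t}.Infinite := by
    by_contra hcon
    push_neg at hcon
    have hfin : (⋃ t ∈ (s.powerset : Finset (Finset (EuclideanSpace ℝ (Fin n)))),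
        {k : ℕ | T k = t}).Finite := by
      apply Set.Finite.biUnion (s.powerset.finite_toSet)
      intro t ht
      rcases hcon t ht with h
      exact h
    have huniv : (Set.univ : Set ℕ) ⊆ ⋃ t ∈ (s.powerset : Finset (Finset (EuclideanSpace ℝ (Fin n)))),
        {k : ℕ | T k = t} := by
      intro k _
      exact Set.mem_biUnion (hTsub k) rfl
    exact Set.infinite_univ (hfin.subset huniv)
  obtain ⟨t, _, htinf⟩ := hpigeon
  obtain ⟨k0, hk0⟩ := htinf.nonempty
  have hk0T : T k0 = t := hk0
  set F := convexHull ℝ (↑t : Set (EuclideanSpace ℝ (Fin n))) with hF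
  -- F is the argmax face of w k0
  have hargmax : ∀ k, {xx ∈ K | ⟪xx, w k⟫ = s.sup' hs (fun v => ⟪v, w k⟫)} =
      convexHull ℝ (↑(T k) : Set (EuclideanSpace ℝ (Fin n))) := fun k => argmax_eq_hull hs (w k)
  have hFface : IsFace K F := by
    have := isFace_argmax hs (w k0)
    rw [hargmax k0, hk0T] at this
    exact this
  have hFne : F.Nonempty := by
    obtain ⟨v, hv⟩ := argmax_nonempty hs (w k0)
    exact ⟨v, subset_convexHull ℝ _ (by rw [← hk0T]; exact hv)⟩
  have hzmem : ∀ k, T k = t → z k ∈ F := by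
    intro k hkt
    have : z k ∈ {xx ∈ K | ⟪xx, w k⟫ = s.sup' hs (fun v => ⟪v, w k⟫)} :=
      (mem_argmax_iff hs (w k) (z k)).2 ⟨hzK k, fun zz hzz => hopt k zz hzz⟩
    rw [hargmax k, hkt] at this
    exact this
  have hwN : w k0 ∈ normalConeAtFace K F := by
    intro xx hxx zz hzz
    have hxx' : xx ∈ {xx ∈ K | ⟪xx, w k0⟫ = s.sup' hs (fun v => ⟪v, w k0⟫)} := by
      rw [hargmax k0, hk0T]; exact hxx
    exact ((mem_argmax_iff hs (w k0) xx).1 hxx').2 zz hzz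
  have hPpw : Pp (w k0) = u := by
    rw [hw, hPp]
    simp only [map_add]
    have h1 : (Submodule.orthogonalProjectionOnto Eᗮ u : EuclideanSpace ℝ (Fin n)) = u :=
      Submodule.starProjection_eq_self_iff.2 huE
    have h2 : Submodule.orthogonalProjectionOnto Eᗮ (e k0) = 0 := by
      apply Submodule.orthogonalProjectionOnto_apply_of_mem_orthogonal
      exact Submodule.le_orthogonal_orthogonal E (Submodule.smul_mem _ _ (haE k0))
    push_cast
    rw [h1, h2]
    simp
  -- y is in PE '' F
  have hyF : y ∈ PE '' F := by
    have hcomp : IsCompact (PE '' F) := (t.finite_toSet.isCompact_convexHull ℝ).image hPEcont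
    have hclosed : IsClosed (PE '' F) := hcomp.isClosed
    rw [← hclosed.closure_eq]
    rw [Metric.mem_closure_iff]
    intro ε hε
    obtain ⟨k, hkmem, hklt⟩ := htinf.exists_gt (Nat.ceil (B/ε^2))
    refine ⟨PE (z k), Set.mem_image_of_mem PE (hzmem k hkmem), ?_⟩
    have h1 : ‖a k‖^2 ≤ B/((k:ℝ)+1) := hbound k
    have h2 : B/((k:ℝ)+1) < ε^2 := by
      rw [div_lt_iff₀ (by positivity)]
      have : (B/ε^2 : ℝ) < (k:ℝ)+1 := by
        calc (B/ε^2 : ℝ) ≤ (Nat.ceil (B/ε^2) : ℝ) := Nat.le_ceil _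
          _ < (k:ℝ)+1 := by exact_mod_cast Nat.lt_succ_of_lt hklt
      calc B = (B/ε^2)*ε^2 := by field_simp
        _ < ((k:ℝ)+1)*ε^2 := mul_lt_mul_of_pos_right this (by positivity)
        _ = ε^2*((k:ℝ)+1) := by ring

    have h3 : ‖a k‖ < ε := by
      by_contra hcon
      push_neg at hcon
      have : ε^2 ≤ ‖a k‖^2 := by nlinarith [norm_nonneg (a k)]
      linarith
    rw [dist_eq_norm]
    calc ‖y - PE (z k)‖ = ‖a k‖ := by rw [ha]; simp [norm_sub_rev]
      _ < ε := h3
  exact ⟨F, hFface, hFne, ⟨w k0, hwN, hPpw⟩, hyF⟩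

/-- difference of points with equal `E`-projections lies in `Eᗮ`. -/
lemma sub_mem_orthogonal_of_PE_eq {n : ℕ} {E : Submodule ℝ (EuclideanSpace ℝ (Fin n))}
    {PE : EuclideanSpace ℝ (Fin n) → EuclideanSpace ℝ (Fin n)}
    (hPE : PE = fun x => (Submodule.orthogonalProjectionOnto E x : EuclideanSpace ℝ (Fin n)))
    {p q : EuclideanSpace ℝ (Fin n)} (h : PE p = PE q) : p - q ∈ Eᗮ := by
  rw [← Submodule.orthogonalProjectionOnto_eq_zero_iff]
  rw [hPE] at h
  simp only at h
  have : Submodule.orthogonalProjectionOnto E p = Submodule.orthogonalProjectionOnto E q := Subtype.coe_injective h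
  rw [map_sub, this, sub_self]

lemma inner_Pp_eq {n : ℕ} {E : Submodule ℝ (EuclideanSpace ℝ (Fin n))}
    {Pp : EuclideanSpace ℝ (Fin n) → EuclideanSpace ℝ (Fin n)}
    (hPp : Pp = fun x => (Submodule.orthogonalProjectionOnto Eᗮ x : EuclideanSpace ℝ (Fin n)))
    {m : EuclideanSpace ℝ (Fin n)} (hm : m ∈ Eᗮ) (w : EuclideanSpace ℝ (Fin n)) :
    ⟪m, Pp w⟫ = ⟪m, w⟫ := by
  rw [hPp]
  have hmm : (Submodule.orthogonalProjectionOnto Eᗮ m : EuclideanSpace ℝ (Fin n)) = m :=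
    Submodule.starProjection_eq_self_iff.2 hm
  calc ⟪m, (Submodule.orthogonalProjectionOnto Eᗮ w : EuclideanSpace ℝ (Fin n))⟫
      = ⟪(Submodule.orthogonalProjectionOnto Eᗮ w : EuclideanSpace ℝ (Fin n)), m⟫ := real_inner_comm _ _
    _ = ⟪w, (Submodule.orthogonalProjectionOnto Eᗮ m : EuclideanSpace ℝ (Fin n))⟫ :=
        Submodule.inner_starProjection_left_eq_right Eᗮ w m
    _ = ⟪w, m⟫ := by rw [hmm]
    _ = ⟪m, w⟫ := real_inner_comm _ _

end Aux

theorem shadow_system_of_faces_of_polytope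
    (n d : ℕ) (hd : 1 ≤ d) (hdn : d ≤ n - 1)
    (s : Finset (EuclideanSpace ℝ (Fin n))) (hs : s.Nonempty)
    (K : Set (EuclideanSpace ℝ (Fin n)))
    (hK : K = convexHull ℝ (↑s : Set (EuclideanSpace ℝ (Fin n))))
    (E : Submodule ℝ (EuclideanSpace ℝ (Fin n))) (hEd : Module.finrank ℝ E = d)
    (PE Pp : EuclideanSpace ℝ (Fin n) → EuclideanSpace ℝ (Fin n))
    (hPE : PE = fun x => (Submodule.orthogonalProjectionOnto E x : EuclideanSpace ℝ (Fin n)))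
    (hPp : Pp = fun x => (Submodule.orthogonalProjectionOnto Eᗮ x : EuclideanSpace ℝ (Fin n)))
    (u : EuclideanSpace ℝ (Fin n)) (huE : u ∈ Eᗮ)
    (hu : ∀ F : Set (EuclideanSpace ℝ (Fin n)), IsFace K F → F.Nonempty →
      setDim (Pp '' normalConeAtFace K F) ≤ n - d - 1 → u ∉ Pp '' normalConeAtFace K F)
    (𝓕 : Set (Set (EuclideanSpace ℝ (Fin n))))
    (h𝓕 : 𝓕 = {F | IsFace K F ∧ F.Nonempty ∧ u ∈ Pp '' normalConeAtFace K F}) :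
    (∀ F₁ ∈ 𝓕, ∀ F₂ ∈ 𝓕, F₁ ≠ F₂ →
        Disjoint (PE '' intrinsicInterior ℝ F₁) (PE '' intrinsicInterior ℝ F₂)) ∧
    (⋃ F ∈ 𝓕, PE '' F) = PE '' K ∧
    (∀ F ∈ 𝓕, setDim F ≤ d) ∧
    (∀ F ∈ 𝓕, setDim F = d → Set.InjOn PE F) := by
  subst h𝓕
  have hKconv : Convex ℝ K := hK ▸ convex_convexHull ℝ _
  refine ⟨?_, ?_, ?_, ?_⟩
  · -- disjointness
    intro F₁ h₁ F₂ h₂ hne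
    obtain ⟨hF₁, hF₁ne, hF₁u⟩ := h₁
    obtain ⟨hF₂, hF₂ne, hF₂u⟩ := h₂
    by_contra hcon
    rw [Set.not_disjoint_iff] at hcon
    obtain ⟨yy, ⟨x₁, hx₁, hpe₁⟩, ⟨x₂, hx₂, hpe₂⟩⟩ := hcon
    have x₁F : x₁ ∈ F₁ := intrinsicInterior_subset hx₁
    have x₂F : x₂ ∈ F₂ := intrinsicInterior_subset hx₂
    have x₁K : x₁ ∈ K := hF₁.1 x₁F
    have x₂K : x₂ ∈ K := hF₂.1 x₂F
    have hx12 : x₁ ≠ x₂ := by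
      rintro rfl
      exact hne (Set.Subset.antisymm
        (face_subset_of_mem_intrinsicInterior hKconv hF₁ hF₂ hx₁ x₂F)
        (face_subset_of_mem_intrinsicInterior hKconv hF₂ hF₁ hx₂ (intrinsicInterior_subset hx₁)))
    have hpe : PE x₂ = PE x₁ := by rw [hpe₁, hpe₂]
    have hmE : x₂ - x₁ ∈ Eᗮ := sub_mem_orthogonal_of_PE_eq hPE hpe
    have hm0 : x₂ - x₁ ≠ 0 := sub_ne_zero.2 (Ne.symm hx12)
    obtain ⟨w₁, hw₁N, hPpw₁⟩ := hF₁u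
    obtain ⟨w₂, hw₂N, hPpw₂⟩ := hF₂u
    have hmw₁ : ⟪x₂ - x₁, w₁⟫ = ⟪x₂ - x₁, u⟫ := by
      rw [← hPpw₁, inner_Pp_eq hPp hmE]
    have hmw₂ : ⟪x₂ - x₁, w₂⟫ = ⟪x₂ - x₁, u⟫ := by
      rw [← hPpw₂, inner_Pp_eq hPp hmE]
    have hle₁ : ⟪x₂ - x₁, w₁⟫ ≤ 0 := hw₁N x₁ x₁F x₂ x₂K
    have hle₂ : ⟪x₁ - x₂, w₂⟫ ≤ 0 := hw₂N x₂ x₂F x₁ x₁K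
    have hneg : ⟪x₁ - x₂, w₂⟫ = -⟪x₂ - x₁, w₂⟫ := by
      rw [show x₁ - x₂ = -(x₂ - x₁) by abel, inner_neg_left]
    have hmu0 : ⟪x₂ - x₁, u⟫ = 0 := by
      rw [hneg, hmw₂] at hle₂
      rw [hmw₁] at hle₁
      linarith
    have hmw₁0 : ⟪x₂ - x₁, w₁⟫ = 0 := by rw [hmw₁, hmu0]
    -- the argmax face of w₁
    set H := {xx ∈ convexHull ℝ (↑s : Set (EuclideanSpace ℝ (Fin n))) |
      ⟪xx, w₁⟫ = s.sup' hs (fun v => ⟪v, w₁⟫)} with hH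
    have hKs : K = convexHull ℝ (↑s : Set (EuclideanSpace ℝ (Fin n))) := hK
    have x₁H : x₁ ∈ H := by
      rw [hH, mem_argmax_iff hs w₁ x₁]
      exact ⟨hKs ▸ x₁K, fun z hz => hw₁N x₁ x₁F z (hKs ▸ hz)⟩
    have x₂H : x₂ ∈ H := by
      rw [hH, mem_argmax_iff hs w₁ x₂]
      refine ⟨hKs ▸ x₂K, fun z hz => ?_⟩
      have h1 : ⟪z - x₁, w₁⟫ ≤ 0 := hw₁N x₁ x₁F z (hKs ▸ hz)
      have h2 : (z : EuclideanSpace ℝ (Fin n)) - x₂ = (z - x₁) - (x₂ - x₁) := by abel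
      rw [h2, inner_sub_left, hmw₁0]
      linarith
    have hHface : IsFace K H := by
      rw [hKs, hH]
      exact isFace_argmax hs w₁
    have hHne : H.Nonempty := ⟨x₁, x₁H⟩
    have hw₁NH : w₁ ∈ normalConeAtFace K H := by
      intro xx hxx z hz
      rw [hH] at hxx
      exact ((mem_argmax_iff hs w₁ xx).1 hxx).2 z (hKs ▸ hz)
    have hHu : u ∈ Pp '' normalConeAtFace K H := ⟨w₁, hw₁NH, hPpw₁⟩
    have hperp : ∀ w ∈ normalConeAtFace K H, ⟪x₂ - x₁, w⟫ = 0 := by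
      intro w hw
      have h1 : ⟪x₂ - x₁, w⟫ ≤ 0 := hw x₁ x₁H x₂ x₂K
      have h2 : ⟪x₁ - x₂, w⟫ ≤ 0 := hw x₂ x₂H x₁ x₁K
      rw [show x₁ - x₂ = -(x₂ - x₁) by abel, inner_neg_left] at h2
      linarith
    exact key_contra hd hdn hEd hPp hu hHface hHne hHu hmE hm0 hperp
  · -- union
    apply Set.Subset.antisymm
    · intro yy hyy
      rw [Set.mem_iUnion₂] at hyy
      obtain ⟨F, hF, hyF⟩ := hyy
      obtain ⟨xx, hxx, rfl⟩ := hyF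
      exact ⟨xx, hF.1.1 hxx, rfl⟩
    · rintro _ ⟨xx, hxx, rfl⟩
      obtain ⟨F, hFface, hFne, hFu, hPEm⟩ :=
        cover_lemma s hs hPE hPp huE (hK ▸ hxx)
      rw [Set.mem_iUnion₂]
      exact ⟨F, ⟨hK ▸ hFface, hFne, by rw [hK]; exact hFu⟩, hPEm⟩
  · -- dimension bound
    rintro F ⟨hFface, hFne, hFu⟩
    exact setDim_face_le hd hdn hEd hPp hu hFface hFne hFu
  · -- injectivity
    rintro F ⟨hFface, hFne, hFu⟩ _ xx hxx xx' hxx' hpe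
    by_contra hne'
    have hmE : xx - xx' ∈ Eᗮ := sub_mem_orthogonal_of_PE_eq hPE hpe
    have hm0 : xx - xx' ≠ 0 := sub_ne_zero.2 hne'
    have hperp : ∀ w ∈ normalConeAtFace K F, ⟪xx - xx', w⟫ = 0 := by
      intro w hw
      have h1 : ⟪xx - xx', w⟫ ≤ 0 := hw xx' hxx' xx (hFface.1 hxx)
      have h2 : ⟪xx' - xx, w⟫ ≤ 0 := hw xx hxx xx' (hFface.1 hxx')
      rw [show xx' - xx = -(xx - xx') by abel, inner_neg_left] at h2
      linarith
    exact key_contra hd hdn hEd hPp hu hFface hFne hFu hmE hm0 hperp
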